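/- Let α, β, γ, δ be real numbers, ε > 0, and let r₀ ≠ 0, r₁, ω be real numbers. Set P₀ = α + β r₀² + ε γ r₀ r₁ and Q₀ = −1 + r₀² + ε δ r₀ r₁. If ω − 1/(2ε) − ε³ P₀ = r₁/r₀ and (r₁/r₀)² = −ε² Q₀, then the functions B₀(x) = r₀ e^{iωx} and B₁(x) = i r₁ e^{iωx} solve the truncated 1:1 resonance system: B₀'(x) = (i/(2ε))B₀(x) + B₁(x) + i ε³ B₀(x) P(x) and B₁'(x) = (i/(2ε))B₁(x) + ε² B₀(x) Q(x) + i ε³ B₁(x) P(x) for all x ∈ ℝ, where K(x) = (i/2)(B₀(x) conj(B₁(x)) − conj(B₀(x)) B₁(x)), P(x) = α + β|B₀(x)|² + ε γ K(x), Q(x) = −1 + |B₀(x)|² + ε δ K(x). -/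

import Mathlib

/-- The quantity `K(B₀,B₁)` of the 1:1 resonance system. -/
noncomputable def Kfun (B₀ B₁ : ℝ → ℂ) (x : ℝ) : ℂ :=
  (Complex.I / 2) * (B₀ x * (starRingEnd ℂ) (B₁ x) - (starRingEnd ℂ) (B₀ x) * B₁ x)

/-- The quantity `P = α + β|B₀|² + εγK`. -/
noncomputable def Pfun (α β γ ε : ℝ) (B₀ B₁ : ℝ → ℂ) (x : ℝ) : ℂ :=
  (α : ℂ) + (β : ℂ) * (‖B₀ x‖ : ℂ) ^ 2 + (ε : ℂ) * (γ : ℂ) * Kfun B₀ B₁ x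

/-- The quantity `Q = −1 + |B₀|² + εδK`. -/
noncomputable def Qfun (δ ε : ℝ) (B₀ B₁ : ℝ → ℂ) (x : ℝ) : ℂ :=
  -1 + (‖B₀ x‖ : ℂ) ^ 2 + (ε : ℂ) * (δ : ℂ) * Kfun B₀ B₁ x

lemma hasDerivAt_cexp_rw (c : ℂ) (ω : ℝ) (x : ℝ) :
    HasDerivAt (fun y : ℝ => c * Complex.exp (Complex.I * ω * y))
      (Complex.I * ω * (c * Complex.exp (Complex.I * ω * x))) x := by
  have h0 : HasDerivAt (fun y : ℝ => Complex.I * (ω : ℂ) * (y : ℂ)) (Complex.I * ω) x := by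
    simpa using (Complex.ofRealCLM.hasDerivAt (x := x)).const_mul (Complex.I * (ω : ℂ))
  have := (h0.cexp).const_mul c
  rw [show Complex.I * ω * (c * Complex.exp (Complex.I * ω * x))
      = c * (Complex.exp (Complex.I * ω * x) * (Complex.I * ω)) by ring]
  exact this

/-- If `(r₀, r₁, ω)` satisfy the two algebraic relations, then the rotating wave
`B₀(x) = r₀ e^{iωx}`, `B₁(x) = i r₁ e^{iωx}` solves the truncated 1:1 resonance system. -/
theorem rotating_wave_solves_truncated_system (α β γ δ ε r₀ r₁ ω : ℝ)
    (hε : 0 < ε) (hr₀ : r₀ ≠ 0)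
    (h1 : ω - 1 / (2 * ε) - ε ^ 3 * (α + β * r₀ ^ 2 + ε * γ * r₀ * r₁) = r₁ / r₀)
    (h2 : (r₁ / r₀) ^ 2 = -ε ^ 2 * (-1 + r₀ ^ 2 + ε * δ * r₀ * r₁)) :
    ∀ x : ℝ,
      (deriv (fun y : ℝ => (r₀ : ℂ) * Complex.exp (Complex.I * ω * y)) x
        = (Complex.I / (2 * ε)) * ((r₀ : ℂ) * Complex.exp (Complex.I * ω * x))
          + Complex.I * (r₁ : ℂ) * Complex.exp (Complex.I * ω * x)
          + Complex.I * (ε : ℂ) ^ 3 * ((r₀ : ℂ) * Complex.exp (Complex.I * ω * x))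
            * Pfun α β γ ε (fun y : ℝ => (r₀ : ℂ) * Complex.exp (Complex.I * ω * y))
                (fun y : ℝ => Complex.I * (r₁ : ℂ) * Complex.exp (Complex.I * ω * y)) x)
      ∧ (deriv (fun y : ℝ => Complex.I * (r₁ : ℂ) * Complex.exp (Complex.I * ω * y)) x
        = (Complex.I / (2 * ε)) * (Complex.I * (r₁ : ℂ) * Complex.exp (Complex.I * ω * x))
          + (ε : ℂ) ^ 2 * ((r₀ : ℂ) * Complex.exp (Complex.I * ω * x))
            * Qfun δ ε (fun y : ℝ => (r₀ : ℂ) * Complex.exp (Complex.I * ω * y))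
                (fun y : ℝ => Complex.I * (r₁ : ℂ) * Complex.exp (Complex.I * ω * y)) x
          + Complex.I * (ε : ℂ) ^ 3
            * (Complex.I * (r₁ : ℂ) * Complex.exp (Complex.I * ω * x))
            * Pfun α β γ ε (fun y : ℝ => (r₀ : ℂ) * Complex.exp (Complex.I * ω * y))
                (fun y : ℝ => Complex.I * (r₁ : ℂ) * Complex.exp (Complex.I * ω * y)) x) := by
  
  intro x
  have hεR : ε ≠ 0 := ne_of_gt hε
  have hεC : (ε : ℂ) ≠ 0 := by exact_mod_cast hεR
  have h1' : ω * r₀ * (2 * ε) = r₀ + r₁ * (2 * ε)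
      + ε ^ 3 * (α + β * r₀ ^ 2 + ε * γ * r₀ * r₁) * r₀ * (2 * ε) := by
    field_simp at h1
    linarith [h1]
  have h2' : r₁ ^ 2 = -ε ^ 2 * (-1 + r₀ ^ 2 + ε * δ * r₀ * r₁) * r₀ ^ 2 := by
    field_simp at h2
    linarith [h2]
  have H1 : (ω : ℂ) * r₀ * (2 * ε) = r₀ + r₁ * (2 * ε)
      + (ε : ℂ) ^ 3 * (α + β * r₀ ^ 2 + ε * γ * r₀ * r₁) * r₀ * (2 * ε) := by
    exact_mod_cast congrArg (Complex.ofReal) h1'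
  have H2 : (r₁ : ℂ) ^ 2 = -(ε : ℂ) ^ 2 * (-1 + r₀ ^ 2 + ε * δ * r₀ * r₁) * r₀ ^ 2 := by
    exact_mod_cast congrArg (Complex.ofReal) h2'
  set e : ℂ := Complex.exp (Complex.I * ω * x) with he
  have hconj : (starRingEnd ℂ) e = Complex.exp (-(Complex.I * ω * x)) := by
    rw [he, ← Complex.exp_conj]
    congr 1
    simp [Complex.ext_iff]
  have hmul : e * Complex.exp (-(Complex.I * ω * x)) = 1 := by
    rw [he, ← Complex.exp_add]
    simp
  have habse : ‖e‖ = 1 := by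
    rw [he, Complex.norm_exp]
    simp
  have hB : ((‖(r₀ : ℂ) * e‖ : ℝ) : ℂ) ^ 2 = (r₀ : ℂ) ^ 2 := by
    rw [norm_mul, habse, Complex.norm_real, Real.norm_eq_abs, mul_one]
    norm_cast
    exact sq_abs r₀
  have hK : Kfun (fun y : ℝ => (r₀ : ℂ) * Complex.exp (Complex.I * ω * y))
      (fun y : ℝ => Complex.I * (r₁ : ℂ) * Complex.exp (Complex.I * ω * y)) x
      = (r₀ : ℂ) * r₁ := by
    simp only [Kfun, ← he, map_mul, hconj, Complex.conj_I, Complex.conj_ofReal]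
    linear_combination (-Complex.I ^ 2 * (r₀ : ℂ) * r₁) * hmul - ((r₀ : ℂ) * r₁) * Complex.I_sq
  have hP : Pfun α β γ ε (fun y : ℝ => (r₀ : ℂ) * Complex.exp (Complex.I * ω * y))
      (fun y : ℝ => Complex.I * (r₁ : ℂ) * Complex.exp (Complex.I * ω * y)) x
      = (α : ℂ) + β * r₀ ^ 2 + ε * γ * (r₀ * r₁) := by
    simp only [Pfun, hK, ← he, hB]
  have hQ : Qfun δ ε (fun y : ℝ => (r₀ : ℂ) * Complex.exp (Complex.I * ω * y))
      (fun y : ℝ => Complex.I * (r₁ : ℂ) * Complex.exp (Complex.I * ω * y)) x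
      = -1 + (r₀ : ℂ) ^ 2 + ε * δ * (r₀ * r₁) := by
    simp only [Qfun, hK, ← he, hB]
  have h3 : ω * r₁ * (2 * ε) = r₁ - 2 * ε ^ 3 * r₀ * (-1 + r₀ ^ 2 + ε * δ * r₀ * r₁)
      + 2 * ε ^ 4 * (α + β * r₀ ^ 2 + ε * γ * r₀ * r₁) * r₁ := by
    apply mul_left_cancel₀ hr₀
    linear_combination r₁ * h1' + 2 * ε * h2'
  have H3 : (ω : ℂ) * r₁ * (2 * ε) = r₁ - 2 * (ε : ℂ) ^ 3 * r₀ * (-1 + r₀ ^ 2 + ε * δ * r₀ * r₁)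
      + 2 * (ε : ℂ) ^ 4 * (α + β * r₀ ^ 2 + ε * γ * r₀ * r₁) * r₁ := by
    exact_mod_cast congrArg (Complex.ofReal) h3
  constructor
  · rw [(hasDerivAt_cexp_rw (r₀ : ℂ) ω x).deriv, hP, ← he]
    field_simp
    linear_combination e * H1
  · rw [(hasDerivAt_cexp_rw (Complex.I * (r₁ : ℂ)) ω x).deriv, hP, hQ, ← he]
    field_simp
    linear_combination Complex.I ^ 2 * e * H3 + (-2 * (ε : ℂ) ^ 3 * r₀
      * (-1 + r₀ ^ 2 + ε * δ * r₀ * r₁) * e) * Complex.I_sq
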